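/- For every λ > 0, α ∈ ℝⁿ and φ ∈ BUC_η, the function ψ(θ) = (1/λ)e^{λθ}[α + φ(0)] + ∫_θ^0 e^{λ(θ-l)} φ(l) dl satisfies ‖ψ‖_η ≤ (1/λ)(‖α‖ + ‖φ‖_η), where ‖ψ‖_η = sup_{θ≤0} e^{ηθ}‖ψ(θ)‖. Consequently the resolvent of A satisfies ‖(λI - A)^{-1}‖ ≤ 1/λ for all λ > 0, so A is a Hille–Yosida operator with constants (M, ω) = (1, 0). -/

import Mathlib

open Set Filter Topology

noncomputable def etaNorm (η : ℝ) {F : Type*} [NormedAddCommGroup F] (φ : ℝ → F) : ℝ :=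
  sSup ((fun θ => Real.exp (η * θ) * ‖φ θ‖) '' Set.Iic 0)

def BUCmem (η : ℝ) {F : Type*} [NormedAddCommGroup F] [NormedSpace ℝ F] (φ : ℝ → F) : Prop :=
  ContinuousOn φ (Set.Iic 0) ∧
  BddAbove ((fun θ => Real.exp (η * θ) * ‖φ θ‖) '' Set.Iic 0) ∧
  UniformContinuousOn (fun θ => Real.exp (η * θ) • φ θ) (Set.Iic 0)

def BUC1mem (η : ℝ) {F : Type*} [NormedAddCommGroup F] [NormedSpace ℝ F] (φ φ' : ℝ → F) : Prop :=
  BUCmem η φ ∧ BUCmem η φ' ∧ ∀ θ ≤ (0:ℝ), HasDerivWithinAt φ (φ' θ) (Set.Iic 0) θ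

/-- the resolvent estimate `‖ψ‖_η ≤ (1/λ)(‖α‖ + ‖φ‖_η)` for
`ψ(θ) = (1/λ)e^{λθ}[α + φ(0)] + ∫_θ^0 e^{λ(θ-l)}φ(l) dl`, i.e. `‖(λI - A)^{-1}‖ ≤ 1/λ`
for every `λ > 0`, so `A` is a Hille–Yosida operator with `(M,ω) = (1,0)`. -/
theorem resolvent_estimate (η : ℝ) (hη : 0 < η) (n : ℕ) (lam : ℝ) (hlam : 0 < lam)
    (α : Fin n → ℝ) (φ : ℝ → (Fin n → ℝ)) (hφ : BUCmem η φ) :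
    etaNorm η (fun θ => ((1 / lam) * Real.exp (lam * θ)) • (α + φ 0)
        + ∫ l in θ..(0:ℝ), Real.exp (lam * (θ - l)) • φ l)
      ≤ (1 / lam) * (‖α‖ + etaNorm η φ) := by
  set M := etaNorm η φ with hMdef
  have hφc := hφ.1
  have hbdd := hφ.2.1
  have hle : ∀ l ≤ (0:ℝ), Real.exp (η * l) * ‖φ l‖ ≤ M := fun l hl =>
    le_csSup hbdd ⟨l, hl, rfl⟩
  have hφ0 : ‖φ 0‖ ≤ M := by simpa using hle 0 le_rfl
  have hM0 : (0:ℝ) ≤ M := le_trans (norm_nonneg _) hφ0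
  have hφl : ∀ l ≤ (0:ℝ), ‖φ l‖ ≤ Real.exp (-(η * l)) * M := by
    intro l hl
    have h1 : (0:ℝ) < Real.exp (η * l) := Real.exp_pos _
    rw [Real.exp_neg, inv_mul_eq_div, le_div_iff₀ h1]
    nlinarith [hle l hl]
  have hA0 : (0:ℝ) ≤ ‖α‖ + M := by positivity
  apply Real.sSup_le
  · rintro x ⟨θ, hθ, rfl⟩
    simp only [Set.mem_Iic] at hθ
    have hμ : 0 < lam + η := by linarith
    -- continuity / integrability
    have hIcc : Set.uIcc θ 0 ⊆ Set.Iic (0:ℝ) := by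
      rw [Set.uIcc_of_le hθ]
      exact fun x hx => hx.2
    have hcont : ContinuousOn (fun l => Real.exp (lam * (θ - l)) • φ l) (Set.uIcc θ 0) :=
      ((Real.continuous_exp.comp (by fun_prop)).continuousOn).smul (hφc.mono hIcc)
    have hint : IntervalIntegrable (fun l => Real.exp (lam * (θ - l)) • φ l)
        MeasureTheory.volume θ 0 := hcont.intervalIntegrable
    -- bound the integral
    have h1 : ‖∫ l in θ..(0:ℝ), Real.exp (lam * (θ - l)) • φ l‖
        ≤ ∫ l in θ..(0:ℝ), Real.exp (lam * θ) * (Real.exp (-((lam + η) * l)) * M) := by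
      refine (intervalIntegral.norm_integral_le_integral_norm hθ).trans ?_
      refine intervalIntegral.integral_mono_on hθ hint.norm
        (Continuous.intervalIntegrable (by fun_prop) _ _) ?_
      intro l hl
      rw [norm_smul, Real.norm_eq_abs, abs_of_pos (Real.exp_pos _)]
      have hstep := mul_le_mul_of_nonneg_left (hφl l hl.2) (Real.exp_pos (lam * (θ - l))).le
      refine hstep.trans (le_of_eq ?_)
      rw [← mul_assoc, ← mul_assoc, ← Real.exp_add, ← Real.exp_add,
        show lam * (θ - l) + -(η * l) = lam * θ + -((lam + η) * l) by ring]
    -- compute the comparison integral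
    have hder : ∀ l : ℝ, HasDerivAt (fun x => -Real.exp (-((lam + η) * x)) / (lam + η))
        (Real.exp (-((lam + η) * l))) l := by
      intro l
      have hlin : HasDerivAt (fun x : ℝ => -((lam + η) * x)) (-(lam + η)) l := by
        have h : HasDerivAt (fun x : ℝ => -(lam + η) * x) (-(lam + η) * 1) l :=
          (hasDerivAt_id l).const_mul (-(lam + η))
        simp only [neg_mul, mul_one, id_eq] at h
        exact h
      have h2 : HasDerivAt (fun x : ℝ => Real.exp (-((lam + η) * x)))
          (Real.exp (-((lam + η) * l)) * -(lam + η)) l :=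
        (Real.hasDerivAt_exp _).comp l hlin
      have h3 : HasDerivAt (fun x : ℝ => -Real.exp (-((lam + η) * x)) / (lam + η))
          (-(Real.exp (-((lam + η) * l)) * -(lam + η)) / (lam + η)) l :=
        (h2.neg).div_const _
      convert h3 using 1
      field_simp
    have hexp : ∫ l in θ..(0:ℝ), Real.exp (-((lam + η) * l))
        = (Real.exp (-((lam + η) * θ)) - 1) / (lam + η) := by
      rw [intervalIntegral.integral_eq_sub_of_hasDerivAt (fun l _ => hder l)
        (Continuous.intervalIntegrable (by fun_prop) _ _)]
      field_simp
      simp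
      ring
    have h2 : ∫ l in θ..(0:ℝ), Real.exp (lam * θ) * (Real.exp (-((lam + η) * l)) * M)
        = Real.exp (lam * θ) * M * ((Real.exp (-((lam + η) * θ)) - 1) / (lam + η)) := by
      simp only [intervalIntegral.integral_const_mul, intervalIntegral.integral_mul_const, hexp]
      ring
    -- bound the first term
    have hA : ‖((1 / lam) * Real.exp (lam * θ)) • (α + φ 0)‖
        ≤ (1 / lam) * Real.exp (lam * θ) * (‖α‖ + M) := by
      rw [norm_smul, Real.norm_eq_abs, abs_of_pos (by positivity)]
      exact mul_le_mul_of_nonneg_left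
        ((norm_add_le α (φ 0)).trans (by linarith)) (by positivity)
    -- combine
    have htot : Real.exp (η * θ) * ‖((1 / lam) * Real.exp (lam * θ)) • (α + φ 0)
          + ∫ l in θ..(0:ℝ), Real.exp (lam * (θ - l)) • φ l‖
        ≤ Real.exp (η * θ) * ((1 / lam) * Real.exp (lam * θ) * (‖α‖ + M)
          + Real.exp (lam * θ) * M * ((Real.exp (-((lam + η) * θ)) - 1) / (lam + η))) := by
      refine mul_le_mul_of_nonneg_left ?_ (Real.exp_pos _).le
      exact (norm_add_le _ _).trans (add_le_add hA (h1.trans (le_of_eq h2)))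
    refine htot.trans ?_
    -- arithmetic closing step
    set a := Real.exp (η * θ) with ha
    set b := Real.exp (lam * θ) with hb
    set c := Real.exp (-((lam + η) * θ)) with hc
    set t := Real.exp ((lam + η) * θ) with htdef
    have hE1 : a * b = t := by
      rw [ha, hb, htdef, ← Real.exp_add, show η * θ + lam * θ = (lam + η) * θ by ring]
    have hE3 : a * b * c = 1 := by
      rw [ha, hb, hc, ← Real.exp_add, ← Real.exp_add,
        show η * θ + lam * θ + -((lam + η) * θ) = 0 by ring, Real.exp_zero]
    have ht1 : t ≤ 1 := Real.exp_le_one_iff.mpr (mul_nonpos_of_nonneg_of_nonpos hμ.le hθ)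
    have ht0 : 0 < t := Real.exp_pos _
    have hrw : a * ((1 / lam) * b * (‖α‖ + M) + b * M * ((c - 1) / (lam + η)))
        = (1 / lam) * (a * b) * (‖α‖ + M) + ((a * b * c) - a * b) * M / (lam + η) := by
      field_simp
    rw [hrw, hE3, hE1]
    have hkey : (1 - t) * M / (lam + η) ≤ (1 - t) * (‖α‖ + M) / lam := by
      apply div_le_div₀ (mul_nonneg (by linarith) hA0)
        (mul_le_mul_of_nonneg_left (by linarith [norm_nonneg α]) (by linarith)) hlam (by linarith)
    have heq : (1 / lam) * t * (‖α‖ + M) + (1 - t) * (‖α‖ + M) / lam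
        = (1 / lam) * (‖α‖ + M) := by
      field_simp
      ring
    nlinarith [hkey]
  · positivity
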